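/- Let X and η be independent random variables, each exponentially distributed with rate 1, and define the Markov kernel P on [0,∞) by Pf(x) = E[f((x + X)e^{−η})]. Then for every R > 0, every measurable function f : [0,∞) → ℝ with sup_{z ≥ 0} |f(z)| ≤ 1, and all 0 ≤ x ≤ y ≤ R, one has |Pf(x) − Pf(y)| ≤ 2(1 − e^{−R}). -/

import Mathlib

open MeasureTheory ProbabilityTheory Real Set
open scoped NNReal ENNReal

lemma exp_pdf_eq (s : ℝ) :
    exponentialPDFReal 1 s = if 0 ≤ s then Real.exp (-s) else 0 := by
  simp [exponentialPDFReal, gammaPDFReal]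

lemma expMeasure_one_Iio : (expMeasure 1) (Iio 0) = 0 := by
  have : expMeasure 1 = volume.withDensity (exponentialPDF 1) := rfl
  rw [this, withDensity_apply _ measurableSet_Iio]
  exact lintegral_exponentialPDF_of_nonpos le_rfl

lemma integral_expMeasure_one (h : ℝ → ℝ) (hm : Measurable h) :
    ∫ s, h s ∂(expMeasure 1) = ∫ s in Ioi 0, h s * Real.exp (-s) := by
  have h1 : expMeasure 1
      = volume.withDensity (fun s => ((Real.toNNReal (exponentialPDFReal 1 s) : ℝ≥0) : ℝ≥0∞)) :=
    rfl
  rw [h1, integral_withDensity_eq_integral_smul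
    ((measurable_exponentialPDFReal 1).real_toNNReal)]
  have h2 : (fun s => (Real.toNNReal (exponentialPDFReal 1 s)) • h s)
      = Set.indicator (Ici 0) (fun s => h s * Real.exp (-s)) := by
    funext s
    rw [NNReal.smul_def, smul_eq_mul, exp_pdf_eq]
    by_cases hs : 0 ≤ s
    · rw [if_pos hs, Set.indicator_of_mem (mem_Ici.mpr hs),
        Real.coe_toNNReal _ (Real.exp_nonneg _)]
      ring
    · rw [if_neg hs, Set.indicator_of_notMem (by simpa using hs)]
      simp
  rw [h2, integral_indicator measurableSet_Ici, integral_Ici_eq_integral_Ioi]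

lemma exp_neg_int {a : ℝ} : IntegrableOn (fun u : ℝ => Real.exp (-u)) (Ioi a) := by
  simpa using exp_neg_integrableOn_Ioi a one_pos

lemma key1d (f : ℝ → ℝ) (hf : Measurable f) (hfb : ∀ z : ℝ, 0 ≤ z → |f z| ≤ 1)
    (c : ℝ) (hc : 0 ≤ c) (x y : ℝ) (hx : 0 ≤ x) (hxy : x ≤ y) :
    |(∫ s in Ioi 0, f ((x + s) * c) * Real.exp (-s)) -
     (∫ s in Ioi 0, f ((y + s) * c) * Real.exp (-s))| ≤ 2 * (1 - Real.exp (-(y - x))) := by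
  set d := y - x with hd
  have hd0 : 0 ≤ d := by simp [hd]; linarith
  set A : ℝ → ℝ := fun u => f ((x + u) * c) * Real.exp (-u) with hA
  have hAm : Measurable A := by
    apply Measurable.mul
    · exact hf.comp (by fun_prop)
    · fun_prop
  have hAbound : ∀ u : ℝ, 0 < u → |A u| ≤ Real.exp (-u) := by
    intro u hu
    have harg : 0 ≤ (x + u) * c := mul_nonneg (by linarith) hc
    rw [hA, abs_mul, abs_of_nonneg (Real.exp_nonneg _)]
    calc |f ((x + u) * c)| * Real.exp (-u) ≤ 1 * Real.exp (-u) :=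
          mul_le_mul_of_nonneg_right (hfb _ harg) (Real.exp_nonneg _)
      _ = Real.exp (-u) := one_mul _
  have hAint : ∀ a : ℝ, 0 ≤ a → IntegrableOn A (Ioi a) := by
    intro a ha
    refine Integrable.mono' exp_neg_int hAm.aestronglyMeasurable ?_
    filter_upwards [ae_restrict_mem measurableSet_Ioi] with u hu
    rw [Real.norm_eq_abs]
    exact hAbound u (lt_of_le_of_lt ha hu)
  have hAint0 : IntegrableOn A (Ioi 0) := hAint 0 le_rfl
  have hAintd : IntegrableOn A (Ioi d) := hAint d hd0
  have hAintc : IntegrableOn A (Ioc 0 d) :=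
    hAint0.mono_set Ioc_subset_Ioi_self
  -- translation
  have htrans : (∫ s in Ioi 0, f ((y + s) * c) * Real.exp (-s))
      = Real.exp d * ∫ u in Ioi d, A u := by
    have key : ∀ s : ℝ,
        Set.indicator (Ioi d) (fun u => Real.exp d * A u) (s + d)
        = Set.indicator (Ioi 0) (fun s => f ((y + s) * c) * Real.exp (-s)) s := by
      intro s
      by_cases hs : 0 < s
      · rw [Set.indicator_of_mem (by simpa using hs : s + d ∈ Ioi d),
          Set.indicator_of_mem (by simpa using hs)]
        have h1 : x + (s + d) = y + s := by rw [hd]; ring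
        have h2 : Real.exp d * Real.exp (-(s + d)) = Real.exp (-s) := by
          rw [← Real.exp_add]; congr 1; ring
        show Real.exp d * (f ((x + (s + d)) * c) * Real.exp (-(s + d)))
            = f ((y + s) * c) * Real.exp (-s)
        rw [h1, ← h2]; ring
      · rw [Set.indicator_of_notMem (by simpa using hs),
          Set.indicator_of_notMem (by simpa using hs)]
    calc (∫ s in Ioi 0, f ((y + s) * c) * Real.exp (-s))
        = ∫ s, Set.indicator (Ioi 0) (fun s => f ((y + s) * c) * Real.exp (-s)) s :=
          (integral_indicator measurableSet_Ioi).symm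
      _ = ∫ s, Set.indicator (Ioi d) (fun u => Real.exp d * A u) (s + d) :=
          integral_congr_ae (Filter.Eventually.of_forall fun s => (key s).symm)
      _ = ∫ u, Set.indicator (Ioi d) (fun u => Real.exp d * A u) u :=
          MeasureTheory.integral_add_right_eq_self _ d
      _ = ∫ u in Ioi d, Real.exp d * A u := integral_indicator measurableSet_Ioi
      _ = Real.exp d * ∫ u in Ioi d, A u := integral_const_mul _ _
  -- split
  have hsplit : (∫ u in Ioi 0, A u) = (∫ u in Ioc 0 d, A u) + ∫ u in Ioi d, A u := by
    rw [← setIntegral_union (Ioc_disjoint_Ioi le_rfl) measurableSet_Ioi hAintc hAintd,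
      Ioc_union_Ioi_eq_Ioi hd0]
  have hsplitexp : (∫ u in Ioc 0 d, Real.exp (-u)) = 1 - Real.exp (-d) := by
    have h0 : (∫ u in Ioi (0:ℝ), Real.exp (-u))
        = (∫ u in Ioc 0 d, Real.exp (-u)) + ∫ u in Ioi d, Real.exp (-u) := by
      rw [← setIntegral_union (Ioc_disjoint_Ioi le_rfl) measurableSet_Ioi
        (exp_neg_int.mono_set Ioc_subset_Ioi_self) exp_neg_int,
        Ioc_union_Ioi_eq_Ioi hd0]
    rw [integral_exp_neg_Ioi, integral_exp_neg_Ioi, neg_zero, Real.exp_zero] at h0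
    linarith
  -- bounds
  have hb1 : |∫ u in Ioc 0 d, A u| ≤ 1 - Real.exp (-d) := by
    rw [← hsplitexp]
    calc |∫ u in Ioc 0 d, A u| ≤ ∫ u in Ioc 0 d, |A u| := by
          simpa [Real.norm_eq_abs] using
            norm_integral_le_integral_norm (μ := volume.restrict (Ioc 0 d)) A
      _ ≤ ∫ u in Ioc 0 d, Real.exp (-u) := by
          refine setIntegral_mono_on hAintc.abs
            (exp_neg_int.mono_set Ioc_subset_Ioi_self) measurableSet_Ioc ?_
          intro u hu; exact hAbound u hu.1
  have hb2 : |∫ u in Ioi d, A u| ≤ Real.exp (-d) := by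
    calc |∫ u in Ioi d, A u| ≤ ∫ u in Ioi d, |A u| := by
          simpa [Real.norm_eq_abs] using
            norm_integral_le_integral_norm (μ := volume.restrict (Ioi d)) A
      _ ≤ ∫ u in Ioi d, Real.exp (-u) := by
          refine setIntegral_mono_on hAintd.abs exp_neg_int measurableSet_Ioi ?_
          intro u hu; exact hAbound u (lt_of_le_of_lt hd0 hu)
      _ = Real.exp (-d) := integral_exp_neg_Ioi d
  have hfirst : (∫ s in Ioi 0, f ((x + s) * c) * Real.exp (-s)) = ∫ u in Ioi 0, A u := rfl
  rw [hfirst, htrans, hsplit]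
  have hexp1 : Real.exp d * Real.exp (-d) = 1 := by
    rw [← Real.exp_add]; simp
  have hed : 1 ≤ Real.exp d := Real.one_le_exp hd0
  calc |(∫ u in Ioc 0 d, A u) + (∫ u in Ioi d, A u) - Real.exp d * ∫ u in Ioi d, A u|
      = |(∫ u in Ioc 0 d, A u) + (1 - Real.exp d) * ∫ u in Ioi d, A u| := by congr 1; ring
    _ ≤ |∫ u in Ioc 0 d, A u| + |(1 - Real.exp d) * ∫ u in Ioi d, A u| := abs_add_le _ _
    _ ≤ (1 - Real.exp (-d)) + (Real.exp d - 1) * Real.exp (-d) := by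
        rw [abs_mul]
        refine add_le_add hb1 (mul_le_mul ?_ hb2 (abs_nonneg _) (by linarith)) 
        rw [abs_of_nonpos (by linarith)]; linarith
    _ = 2 * (1 - Real.exp (-d)) := by nlinarith [hexp1]

theorem stmt_10 {Ω : Type*} [MeasurableSpace Ω] (P : Measure Ω) [IsProbabilityMeasure P]
    (X η : Ω → ℝ) (hX : Measurable X) (hη : Measurable η)
    (hindep : IndepFun X η P)
    (hXd : Measure.map X P = expMeasure 1)
    (hηd : Measure.map η P = expMeasure 1)
    (R : ℝ) (hR : 0 < R)
    (f : ℝ → ℝ) (hf : Measurable f) (hfb : ∀ z : ℝ, 0 ≤ z → |f z| ≤ 1)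
    (x y : ℝ) (hx : 0 ≤ x) (hxy : x ≤ y) (hyR : y ≤ R) :
    |(∫ ω, f ((x + X ω) * Real.exp (-η ω)) ∂P) -
        (∫ ω, f ((y + X ω) * Real.exp (-η ω)) ∂P)|
      ≤ 2 * (1 - Real.exp (-R)) := by
  set μ := expMeasure 1 with hμ
  haveI : IsProbabilityMeasure μ := isProbabilityMeasure_expMeasure one_pos
  have hy : 0 ≤ y := hx.trans hxy
  have hmap : Measure.map (fun ω => (X ω, η ω)) P = μ.prod μ := by
    have h := (indepFun_iff_map_prod_eq_prod_map_map hX.aemeasurable hη.aemeasurable).mp hindep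
    rw [hXd, hηd] at h
    exact h
  set g : ℝ → ℝ × ℝ → ℝ := fun z p => f ((z + p.1) * Real.exp (-p.2)) with hg
  have hgm : ∀ z : ℝ, Measurable (g z) := by
    intro z; exact hf.comp (by fun_prop)
  -- a.e. nonneg first coordinate
  have hae : ∀ᵐ p ∂(μ.prod μ), 0 ≤ p.1 := by
    rw [ae_iff]
    have hset : {p : ℝ × ℝ | ¬ 0 ≤ p.1} = (Iio 0) ×ˢ (univ : Set ℝ) := by
      ext p; simp [not_le]
    rw [hset, Measure.prod_prod, hμ, expMeasure_one_Iio, zero_mul]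
  have hgint : ∀ z : ℝ, 0 ≤ z → Integrable (g z) (μ.prod μ) := by
    intro z hz
    refine Integrable.mono' (integrable_const 1) (hgm z).aestronglyMeasurable ?_
    filter_upwards [hae] with p hp
    rw [Real.norm_eq_abs]
    exact hfb _ (mul_nonneg (by linarith) (Real.exp_nonneg _))
  have hrep : ∀ z : ℝ, 0 ≤ z → (∫ ω, f ((z + X ω) * Real.exp (-η ω)) ∂P)
      = ∫ t, ∫ s, g z (s, t) ∂μ ∂μ := by
    intro z hz
    have h1 : (∫ ω, f ((z + X ω) * Real.exp (-η ω)) ∂P)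
        = ∫ p, g z p ∂(μ.prod μ) := by
      rw [← hmap, integral_map (hX.prodMk hη).aemeasurable (hgm z).aestronglyMeasurable]
    rw [h1, integral_prod_symm _ (hgint z hz)]
  rw [hrep x hx, hrep y hy]
  have hinner : ∀ z t : ℝ, (∫ s, g z (s, t) ∂μ)
      = ∫ s in Ioi 0, f ((z + s) * Real.exp (-t)) * Real.exp (-s) := by
    intro z t
    exact integral_expMeasure_one _ (hf.comp (by fun_prop))
  have hIx : Integrable (fun t => ∫ s, g x (s, t) ∂μ) μ :=
    (hgint x hx).integral_prod_right
  have hIy : Integrable (fun t => ∫ s, g y (s, t) ∂μ) μ :=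
    (hgint y hy).integral_prod_right
  rw [← integral_sub hIx hIy]
  have hbound : ∀ t : ℝ, |(∫ s, g x (s, t) ∂μ) - ∫ s, g y (s, t) ∂μ|
      ≤ 2 * (1 - Real.exp (-(y - x))) := by
    intro t
    rw [hinner, hinner]
    exact key1d f hf hfb (Real.exp (-t)) (Real.exp_nonneg _) x y hx hxy
  have hRyx : Real.exp (-R) ≤ Real.exp (-(y - x)) := by
    apply Real.exp_le_exp.mpr; linarith
  calc |∫ t, ((∫ s, g x (s, t) ∂μ) - ∫ s, g y (s, t) ∂μ) ∂μ|
      ≤ ∫ t, |(∫ s, g x (s, t) ∂μ) - ∫ s, g y (s, t) ∂μ| ∂μ := by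
        simpa [Real.norm_eq_abs] using
          norm_integral_le_integral_norm (μ := μ)
            (fun t => (∫ s, g x (s, t) ∂μ) - ∫ s, g y (s, t) ∂μ)
    _ ≤ ∫ _t, 2 * (1 - Real.exp (-(y - x))) ∂μ := by
        refine integral_mono (hIx.sub hIy).abs (integrable_const _) ?_
        intro t; exact hbound t
    _ = 2 * (1 - Real.exp (-(y - x))) := by simp
    _ ≤ 2 * (1 - Real.exp (-R)) := by linarith
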